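/- The matrices I, α_1, ..., α_D form a basis of the space of symmetric A-like matrices for Q_D; in particular this space has dimension D + 1. -/

import Mathlib

open Matrix BigOperators Finset

/-- Vertex set of the `D`-dimensional hypercube. -/
abbrev Vx (D : ℕ) := Fin D → Fin 2

/-- Number of coordinates at which `x` and `y` differ (Hamming distance). -/
def hamming {D : ℕ} (x y : Vx D) : ℕ :=
  (Finset.univ.filter (fun i => x i ≠ y i)).card

/-- Adjacency matrix of the hypercube `Q_D`. -/
noncomputable def adjA (D : ℕ) : Matrix (Vx D) (Vx D) ℝ :=
  fun x y => if hamming x y = 1 then 1 else 0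

/-- The `i`-adjacency matrix `α_i`. -/
noncomputable def alpha {D : ℕ} (i : Fin D) : Matrix (Vx D) (Vx D) ℝ :=
  fun x y => if (x i ≠ y i ∧ ∀ j, j ≠ i → x j = y j) then 1 else 0

/-- The diagonal matrix `α*_i` with `(x,x)`-entry `(-1)^(x_i)`. -/
noncomputable def alphaStar {D : ℕ} (i : Fin D) : Matrix (Vx D) (Vx D) ℝ :=
  Matrix.diagonal (fun x => (-1 : ℝ) ^ ((x i : ℕ)))

def flp {D : ℕ} (i : Fin D) (x : Vx D) : Vx D := Function.update x i (x i + 1)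

section flips
variable {D : ℕ} (i j k : Fin D) (x y : Vx D)

lemma fin2_ne {a b : Fin 2} (h : a ≠ b) : b = a + 1 := by revert h; revert a b; decide

lemma fin2_add_ne (a : Fin 2) : a + 1 ≠ a := by revert a; decide

lemma fin2_addadd (a : Fin 2) : a + 1 + 1 = a := by revert a; decide

lemma flip_self : flp i x i = x i + 1 := Function.update_self _ _ _

lemma flip_ne (h : j ≠ i) : flp i x j = x j := Function.update_of_ne h _ _

lemma flip_flip' : flp i (flp i x) = x := by
  funext m
  rcases eq_or_ne m i with rfl | h
  · rw [flip_self, flip_self, fin2_addadd]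
  · rw [flip_ne _ _ _ h, flip_ne _ _ _ h]

lemma flip_comm (h : i ≠ j) : flp i (flp j x) = flp j (flp i x) := by
  funext m
  rcases eq_or_ne m i with rfl | hmi
  · rw [flip_self, flip_ne _ _ _ h, flip_ne _ _ _ h, flip_self]
  · rcases eq_or_ne m j with rfl | hmj
    · rw [flip_ne _ _ _ (Ne.symm h), flip_self, flip_self, flip_ne _ _ _ (Ne.symm h)]
    · rw [flip_ne _ _ _ hmi, flip_ne _ _ _ hmj, flip_ne _ _ _ hmj, flip_ne _ _ _ hmi]

lemma flip_index_inj (h : flp i x = flp j x) : i = j := by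
  by_contra hij
  have := congrFun h i
  rw [flip_self, flip_ne _ _ _ hij] at this
  exact fin2_add_ne _ this

lemma ne_flip : x ≠ flp i x := by
  intro h
  have := congrFun h i
  rw [flip_self] at this
  exact fin2_add_ne _ this.symm

lemma hamming_eq_zero_iff : hamming x y = 0 ↔ x = y := by
  rw [hamming, Finset.card_eq_zero, Finset.filter_eq_empty_iff]
  constructor
  · intro h; funext m; have := h (Finset.mem_univ m); simpa using this
  · rintro rfl m _; simp

lemma hamming_flip_one : hamming x (flp i x) = 1 := by
  rw [hamming]
  have : Finset.univ.filter (fun m => x m ≠ flp i x m) = {i} := by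
    ext m
    simp only [Finset.mem_filter, Finset.mem_univ, true_and, Finset.mem_singleton]
    rcases eq_or_ne m i with rfl | h
    · simp [flip_self, (fin2_add_ne (x m)).symm]
    · simp [flip_ne _ _ _ h, h]
  rw [this, Finset.card_singleton]

lemma hamming_eq_one (h : hamming x y = 1) : ∃ i, y = flp i x := by
  rw [hamming, Finset.card_eq_one] at h
  obtain ⟨i, hi⟩ := h
  refine ⟨i, funext fun m => ?_⟩
  rcases eq_or_ne m i with rfl | hm
  · have : m ∈ Finset.univ.filter (fun k => x k ≠ y k) := by rw [hi]; simp
    rw [flip_self]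
    exact fin2_ne (by simpa using this)
  · have hnm : m ∉ Finset.univ.filter (fun k => x k ≠ y k) := by rw [hi]; simpa using hm
    rw [flip_ne _ _ _ hm]
    have h2 : x m = y m := by simpa using hnm
    exact h2.symm

lemma hamming_flip_two (h : i ≠ j) : hamming x (flp i (flp j x)) = 2 := by
  rw [hamming]
  have : Finset.univ.filter (fun m => x m ≠ flp i (flp j x) m) = {i, j} := by
    ext m
    simp only [Finset.mem_filter, Finset.mem_univ, true_and, Finset.mem_insert,
      Finset.mem_singleton]
    rcases eq_or_ne m i with rfl | hmi
    · simp [flip_self, flip_ne _ _ _ h, (fin2_add_ne (x m)).symm]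
    · rcases eq_or_ne m j with rfl | hmj
      · simp [flip_ne _ _ _ hmi, flip_self, (fin2_add_ne (x m)).symm, hmi]
      · simp [flip_ne _ _ _ hmi, flip_ne _ _ _ hmj, hmi, hmj]
  rw [this, Finset.card_pair h]

lemma hamming_flip_flip_two (h : i ≠ j) : hamming (flp i x) (flp j x) = 2 := by
  have h1 := hamming_flip_two i j (flp i x) h
  have h2 : flp i (flp j (flp i x)) = flp j x := by
    rw [flip_comm i j _ h, flip_flip']
  rwa [h2] at h1

lemma hamming_flip_three (hki : k ≠ i) (hkj : k ≠ j) (hij : i ≠ j) :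
    hamming (flp k x) (flp i (flp j x)) = 3 := by
  rw [hamming]
  have : Finset.univ.filter (fun m => flp k x m ≠ flp i (flp j x) m) = {k, i, j} := by
    ext m
    simp only [Finset.mem_filter, Finset.mem_univ, true_and, Finset.mem_insert,
      Finset.mem_singleton]
    rcases eq_or_ne m k with rfl | hmk
    · simp [flip_self, flip_ne _ _ _ hki, flip_ne _ _ _ hkj, (fin2_add_ne (x m))]
    · rcases eq_or_ne m i with rfl | hmi
      · simp [flip_ne _ _ _ (show m ≠ k from hmk), flip_self,
          flip_ne _ _ _ hij, (fin2_add_ne (x m)).symm, hmk]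
      · rcases eq_or_ne m j with rfl | hmj
        · simp [flip_ne _ _ _ (show m ≠ k from hmk), flip_ne _ _ _ hmi, flip_self,
            (fin2_add_ne (x m)).symm, hmk, hmi]
        · simp [flip_ne _ _ _ hmk, flip_ne _ _ _ hmi, flip_ne _ _ _ hmj, hmk, hmi, hmj]
  rw [this]
  rw [Finset.card_insert_of_notMem (by simp [hki, hkj]),
    Finset.card_insert_of_notMem (by simp [hij]), Finset.card_singleton]

lemma hamming_flip_left : hamming (flp i x) y = hamming x (flp i y) := by
  unfold hamming
  congr 1
  apply Finset.filter_congr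
  intro m _
  rcases eq_or_ne m i with rfl | h
  · rw [flip_self, flip_self]
    constructor
    · intro hne heq; exact hne (by rw [heq, fin2_addadd])
    · intro hne heq; exact hne (by rw [← heq, fin2_addadd])
  · rw [flip_ne _ _ _ h, flip_ne _ _ _ h]

end flips

section MatLemmas
variable {D : ℕ}

lemma alpha_eq (i : Fin D) (x y : Vx D) :
    alpha i x y = if y = flp i x then 1 else 0 := by
  unfold alpha
  congr 1
  simp only [eq_iff_iff]
  constructor
  · rintro ⟨h1, h2⟩
    funext m
    rcases eq_or_ne m i with rfl | hm
    · rw [flip_self]; exact fin2_ne h1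
    · rw [flip_ne _ _ _ hm]; exact (h2 m hm).symm
  · rintro rfl
    exact ⟨by rw [flip_self]; exact (fin2_add_ne _).symm, fun j hj => (flip_ne _ _ _ hj).symm⟩

lemma alpha_apply_flp (i : Fin D) (x : Vx D) : alpha i x (flp i x) = 1 := by
  rw [alpha_eq, if_pos rfl]

lemma alpha_apply_ne (i : Fin D) {x y : Vx D} (h : y ≠ flp i x) : alpha i x y = 0 := by
  rw [alpha_eq, if_neg h]

lemma adjA_one {x y : Vx D} (h : hamming x y = 1) : adjA D x y = 1 := if_pos h
lemma adjA_ne {x y : Vx D} (h : hamming x y ≠ 1) : adjA D x y = 0 := if_neg h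

lemma hamming_flip_cancel (i : Fin D) (x y : Vx D) :
    hamming (flp i x) (flp i y) = hamming x y := by
  rw [hamming_flip_left, flip_flip']

lemma alpha_transpose (i : Fin D) : (alpha i)ᵀ = alpha i := by
  ext x y
  rw [Matrix.transpose_apply, alpha_eq, alpha_eq]
  congr 1
  simp only [eq_iff_iff]
  constructor
  · intro h; rw [h, flip_flip']
  · intro h; rw [h, flip_flip']

lemma alpha_comm_adjA (i : Fin D) : alpha i * adjA D = adjA D * alpha i := by
  ext x y
  rw [Matrix.mul_apply, Matrix.mul_apply]
  have h1 : ∑ z, alpha i x z * adjA D z y = adjA D (flp i x) y := by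
    rw [Finset.sum_eq_single_of_mem (flp i x) (Finset.mem_univ _)]
    · rw [alpha_apply_flp, one_mul]
    · intro z _ hz
      rw [alpha_apply_ne i hz, zero_mul]
  have h2 : ∑ z, adjA D x z * alpha i z y = adjA D x (flp i y) := by
    rw [Finset.sum_eq_single_of_mem (flp i y) (Finset.mem_univ _)]
    · rw [show alpha i (flp i y) y = 1 by
        rw [alpha_eq, if_pos (flip_flip' i y).symm], mul_one]
    · intro z _ hz
      rw [show alpha i z y = 0 by
        rw [alpha_eq]
        apply if_neg
        intro h
        exact hz (by rw [h, flip_flip']), mul_zero]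
  rw [h1, h2]
  unfold adjA
  rw [hamming_flip_left]

lemma sum_eq_pair {f : Vx D → ℝ} {a b : Vx D} (hab : a ≠ b)
    (h : ∀ z, z ≠ a → z ≠ b → f z = 0) : ∑ z, f z = f a + f b := by
  have hsub : ({a, b} : Finset (Vx D)) ⊆ Finset.univ := Finset.subset_univ _
  rw [← Finset.sum_subset hsub (fun z _ hz => by
    simp only [Finset.mem_insert, Finset.mem_singleton, not_or] at hz
    exact h z hz.1 hz.2)]
  exact Finset.sum_pair hab

end MatLemmas

section Blemmas
variable {D : ℕ} {B : Matrix (Vx D) (Vx D) ℝ}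
  (hBA : B * adjA D = adjA D * B)
  (hsupp : ∀ x y : Vx D, 2 ≤ hamming x y → B x y = 0)
  (hsym : Bᵀ = B)

/-- classify z by distance from x -/
lemma dist_cases (x z : Vx D) : z = x ∨ (∃ k, z = flp k x) ∨ 2 ≤ hamming x z := by
  rcases Nat.lt_or_ge (hamming x z) 2 with h | h
  · interval_cases h' : hamming x z
    · exact Or.inl ((hamming_eq_zero_iff x z).mp h').symm
    · exact Or.inr (Or.inl (hamming_eq_one x z h'))
  · exact Or.inr (Or.inr h)

include hBA hsupp in
lemma diag_flip (i : Fin D) (x : Vx D) : B x x = B (flp i x) (flp i x) := by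
  have h := congrFun (congrFun hBA x) (flp i x)
  rw [Matrix.mul_apply, Matrix.mul_apply] at h
  have h1 : ∑ z, B x z * adjA D z (flp i x) = B x x := by
    rw [Finset.sum_eq_single_of_mem x (Finset.mem_univ _)]
    · rw [adjA_one (hamming_flip_one i x), mul_one]
    · intro z _ hz
      rcases dist_cases x z with hzx | ⟨k, rfl⟩ | h2
      · exact absurd hzx hz
      · rcases eq_or_ne k i with rfl | hk
        · rw [adjA_ne (by rw [(hamming_eq_zero_iff _ _).mpr rfl]; omega), mul_zero]
        · rw [adjA_ne (by rw [hamming_flip_flip_two k i x hk]; omega), mul_zero]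
      · rw [hsupp x z h2, zero_mul]
  have h2 : ∑ z, adjA D x z * B z (flp i x) = B (flp i x) (flp i x) := by
    rw [Finset.sum_eq_single_of_mem (flp i x) (Finset.mem_univ _)]
    · rw [adjA_one (hamming_flip_one i x), one_mul]
    · intro z _ hz
      rcases dist_cases x z with hzx | ⟨k, rfl⟩ | h2
      · rw [hzx, adjA_ne (by rw [(hamming_eq_zero_iff _ _).mpr rfl]; omega), zero_mul]
      · have hk : k ≠ i := fun h => hz (by rw [h])
        rw [hsupp _ _ (by rw [hamming_flip_flip_two k i x hk]), mul_zero]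
      · rw [adjA_ne (by omega), zero_mul]
  rw [h1] at h; rw [h2] at h; exact h

include hBA hsupp in
lemma offd_rel (i j : Fin D) (hij : i ≠ j) (x : Vx D) :
    B x (flp i x) + B x (flp j x)
      = B (flp i x) (flp j (flp i x)) + B (flp j x) (flp i (flp j x)) := by
  have h := congrFun (congrFun hBA x) (flp i (flp j x))
  rw [Matrix.mul_apply, Matrix.mul_apply] at h
  have hne : flp i x ≠ flp j x := fun h' => hij (flip_index_inj i j x h')
  have h1 : ∑ z, B x z * adjA D z (flp i (flp j x))
      = B x (flp i x) + B x (flp j x) := by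
    rw [sum_eq_pair hne]
    · rw [show adjA D (flp i x) (flp i (flp j x)) = 1 from
        adjA_one (by rw [hamming_flip_cancel, hamming_flip_one]),
        show adjA D (flp j x) (flp i (flp j x)) = 1 from
        adjA_one (hamming_flip_one _ _), mul_one, mul_one]
    · intro z hzi hzj
      rcases dist_cases x z with hzx | ⟨k, rfl⟩ | h2
      · rw [hzx, adjA_ne (by rw [hamming_flip_two i j x hij]; omega), mul_zero]
      · have hki : k ≠ i := fun h' => hzi (by rw [h'])
        have hkj : k ≠ j := fun h' => hzj (by rw [h'])
        rw [adjA_ne (by rw [hamming_flip_three i j k x hki hkj hij]; omega), mul_zero]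
      · rw [hsupp x z h2, zero_mul]
  have h2 : ∑ z, adjA D x z * B z (flp i (flp j x))
      = B (flp i x) (flp i (flp j x)) + B (flp j x) (flp i (flp j x)) := by
    rw [sum_eq_pair hne]
    · rw [adjA_one (hamming_flip_one i x), adjA_one (hamming_flip_one j x), one_mul, one_mul]
    · intro z hzi hzj
      rcases dist_cases x z with hzx | ⟨k, rfl⟩ | h2
      · rw [hzx, adjA_ne (by rw [(hamming_eq_zero_iff _ _).mpr rfl]; omega), zero_mul]
      · have hki : k ≠ i := fun h' => hzi (by rw [h'])
        have hkj : k ≠ j := fun h' => hzj (by rw [h'])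
        rw [hsupp _ _ (by rw [hamming_flip_three i j k x hki hkj hij]; omega), mul_zero]
      · rw [adjA_ne (by omega), zero_mul]
  rw [h1] at h; rw [h2] at h
  rw [h]
  rw [flip_comm i j x hij]

include hsym in
lemma offd_sym (i : Fin D) (x : Vx D) : B (flp i x) (flp i (flp i x)) = B x (flp i x) := by
  rw [flip_flip']
  conv_rhs => rw [← hsym]
  rfl

include hBA hsupp hsym in
lemma offd_flip (i j : Fin D) (x : Vx D) :
    B (flp j x) (flp i (flp j x)) = B x (flp i x) := by
  have Bs : ∀ u v : Vx D, B u v = B v u := by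
    intro u v
    conv_lhs => rw [← hsym]
    rfl
  rcases eq_or_ne j i with rfl | hji
  · exact offd_sym hsym j x
  have hij : i ≠ j := hji.symm
  have e1 := offd_rel hBA hsupp i j hij x
  have e2 := offd_rel hBA hsupp i j hij (flp j x)
  rw [flip_flip' j x] at e2
  have hT : flp j (flp i (flp j x)) = flp i x := by
    rw [flip_comm j i _ hji, flip_flip']
  rw [hT, Bs (flp j x) x, Bs (flp i (flp j x)) (flp i x)] at e2
  have hcomm : flp i (flp j x) = flp j (flp i x) := flip_comm i j x hij
  rw [hcomm] at e1 e2 ⊢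
  linarith

end Blemmas

section Const
variable {D : ℕ}

lemma hamming_flip_lt {i : Fin D} {x y : Vx D} (h : x i ≠ y i) :
    hamming (flp i x) y < hamming x y := by
  have hfe : Finset.univ.filter (fun m => flp i x m ≠ y m)
      = (Finset.univ.filter (fun m => x m ≠ y m)).erase i := by
    ext m
    simp only [Finset.mem_filter, Finset.mem_univ, true_and, Finset.mem_erase]
    rcases eq_or_ne m i with rfl | hm
    · simp only [flip_self]
      constructor
      · intro hne; exact absurd (fin2_ne h).symm hne
      · rintro ⟨hc, -⟩; exact absurd rfl hc
    · rw [flip_ne _ _ _ hm]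
      exact ⟨fun hne => ⟨hm, hne⟩, fun hp => hp.2⟩
  have hi : i ∈ Finset.univ.filter (fun m => x m ≠ y m) := by simp [h]
  rw [hamming, hamming, hfe, Finset.card_erase_of_mem hi]
  have : 0 < (Finset.univ.filter (fun m => x m ≠ y m)).card :=
    Finset.card_pos.mpr ⟨i, hi⟩
  omega

lemma const_of_flip {f : Vx D → ℝ} (hf : ∀ (i : Fin D) (x : Vx D), f (flp i x) = f x)
    (x : Vx D) : f x = f 0 := by
  suffices H : ∀ (n : ℕ) (x : Vx D), hamming x 0 ≤ n → f x = f 0 by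
    exact H _ x le_rfl
  intro n
  induction n with
  | zero =>
    intro x hx
    rw [(hamming_eq_zero_iff x 0).mp (Nat.le_zero.mp hx)]
  | succ n ih =>
    intro x hx
    by_cases h0 : x = 0
    · rw [h0]
    · have hex : ∃ i, x i ≠ (0 : Vx D) i := by
        by_contra hc
        push_neg at hc
        exact h0 (funext hc)
      obtain ⟨i, hi⟩ := hex
      have hlt : hamming (flp i x) 0 < hamming x 0 := hamming_flip_lt hi
      rw [← hf i x]
      exact ih _ (by omega)

variable {B : Matrix (Vx D) (Vx D) ℝ}
  (hBA : B * adjA D = adjA D * B)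
  (hsupp : ∀ x y : Vx D, 2 ≤ hamming x y → B x y = 0)
  (hsym : Bᵀ = B)

include hBA hsupp in
lemma diag_const (x : Vx D) : B x x = B 0 0 :=
  const_of_flip (f := fun x => B x x) (fun i x => (diag_flip hBA hsupp i x).symm) x

include hBA hsupp hsym in
lemma offd_const (i : Fin D) (x : Vx D) : B x (flp i x) = B 0 (flp i 0) :=
  const_of_flip (f := fun x => B x (flp i x)) (fun j x => offd_flip hBA hsupp hsym i j x) x

include hBA hsupp hsym in
lemma decomp :
    B = B 0 0 • (1 : Matrix (Vx D) (Vx D) ℝ) + ∑ i, B 0 (flp i 0) • alpha i := by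
  ext x y
  simp only [Matrix.add_apply, Matrix.smul_apply, Matrix.sum_apply, smul_eq_mul]
  rcases dist_cases x y with hyx | ⟨i, rfl⟩ | h2
  · rw [hyx]
    rw [Matrix.one_apply_eq]
    rw [Finset.sum_eq_zero (fun i _ => by rw [alpha_apply_ne i (ne_flip i x), mul_zero])]
    rw [diag_const hBA hsupp x]
    ring
  · rw [Matrix.one_apply_ne (ne_flip i x)]
    rw [Finset.sum_eq_single_of_mem i (Finset.mem_univ _)
      (fun j _ hj => by
        rw [alpha_apply_ne j (fun h => hj (flip_index_inj i j x h).symm), mul_zero])]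
    rw [alpha_apply_flp, mul_one, offd_const hBA hsupp hsym i x]
    ring
  · have hxy : x ≠ y := fun h => by
      rw [(hamming_eq_zero_iff x y).mpr h] at h2; omega
    rw [hsupp x y h2, Matrix.one_apply_ne hxy]
    rw [Finset.sum_eq_zero (fun i _ => by
      rw [alpha_apply_ne i (fun h => by rw [h, hamming_flip_one] at h2; omega), mul_zero])]
    ring

end Const

theorem sym_Alike_basis (D : ℕ) (hD : 0 < D) :
    LinearIndependent ℝ
      (Sum.elim (fun _ : Unit => (1 : Matrix (Vx D) (Vx D) ℝ)) (fun i : Fin D => alpha i)) ∧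
    (Submodule.span ℝ
        (Set.range (Sum.elim (fun _ : Unit => (1 : Matrix (Vx D) (Vx D) ℝ))
          (fun i : Fin D => alpha i))) : Set (Matrix (Vx D) (Vx D) ℝ)) =
      {B | (B * adjA D = adjA D * B ∧ ∀ x y : Vx D, 2 ≤ hamming x y → B x y = 0) ∧ Bᵀ = B} ∧
    Module.finrank ℝ
      (Submodule.span ℝ
        (Set.range (Sum.elim (fun _ : Unit => (1 : Matrix (Vx D) (Vx D) ℝ))
          (fun i : Fin D => alpha i)))) = D + 1 := by
  set v := Sum.elim (fun _ : Unit => (1 : Matrix (Vx D) (Vx D) ℝ))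
    (fun i : Fin D => alpha i) with hv
  have hli : LinearIndependent ℝ v := by
    rw [Fintype.linearIndependent_iff]
    intro g hg
    have hent : ∀ x y : Vx D, ∑ s : Unit ⊕ Fin D, g s * v s x y = 0 := by
      intro x y
      have := congrFun (congrFun hg x) y
      rw [Matrix.sum_apply] at this
      simpa [Matrix.smul_apply] using this
    have hsplit : ∀ x y : Vx D,
        g (Sum.inl ()) * (1 : Matrix (Vx D) (Vx D) ℝ) x y
          + ∑ i : Fin D, g (Sum.inr i) * alpha i x y = 0 := by
      intro x y
      have := hent x y
      rw [Fintype.sum_sum_type] at this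
      simpa [hv] using this
    have hinl : g (Sum.inl ()) = 0 := by
      have := hsplit 0 0
      rw [Matrix.one_apply_eq, mul_one,
        Finset.sum_eq_zero (fun i _ => by
          rw [alpha_apply_ne i (ne_flip i 0), mul_zero]), add_zero] at this
      exact this
    have hinr : ∀ i : Fin D, g (Sum.inr i) = 0 := by
      intro i
      have := hsplit 0 (flp i 0)
      rw [Matrix.one_apply_ne (ne_flip i 0), mul_zero, zero_add,
        Finset.sum_eq_single_of_mem i (Finset.mem_univ _)
          (fun j _ hj => by
            rw [alpha_apply_ne j (fun h => hj (flip_index_inj i j 0 h).symm), mul_zero]),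
        alpha_apply_flp, mul_one] at this
      exact this
    rintro (u | i)
    · cases u; exact hinl
    · exact hinr i
  refine ⟨hli, ?_, ?_⟩
  · ext B
    simp only [SetLike.mem_coe, Set.mem_setOf_eq]
    constructor
    · intro hB
      refine Submodule.span_induction ?_ ?_ ?_ ?_ hB
      · rintro M ⟨s, rfl⟩
        rcases s with u | i
        · have hv1 : v (Sum.inl u) = 1 := rfl
          rw [hv1]
          refine ⟨⟨by rw [one_mul, mul_one], fun x y h => ?_⟩, ?_⟩
          · have hxy : x ≠ y := fun he => by
              rw [(hamming_eq_zero_iff x y).mpr he] at h; omega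
            exact Matrix.one_apply_ne hxy
          · exact Matrix.transpose_one
        · have hv2 : v (Sum.inr i) = alpha i := rfl
          rw [hv2]
          refine ⟨⟨alpha_comm_adjA i, fun x y h => ?_⟩, alpha_transpose i⟩
          exact alpha_apply_ne i (fun he => by rw [he, hamming_flip_one] at h; omega)
      · exact ⟨⟨by rw [zero_mul, mul_zero], fun x y _ => rfl⟩, Matrix.transpose_zero⟩
      · rintro M N _ _ ⟨⟨hM1, hM2⟩, hM3⟩ ⟨⟨hN1, hN2⟩, hN3⟩
        refine ⟨⟨by rw [add_mul, mul_add, hM1, hN1], fun x y h => ?_⟩, ?_⟩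
        · simp [Matrix.add_apply, hM2 x y h, hN2 x y h]
        · rw [Matrix.transpose_add, hM3, hN3]
      · rintro a M _ ⟨⟨hM1, hM2⟩, hM3⟩
        refine ⟨⟨by rw [Matrix.smul_mul, Matrix.mul_smul, hM1], fun x y h => ?_⟩, ?_⟩
        · simp [Matrix.smul_apply, hM2 x y h]
        · rw [Matrix.transpose_smul, hM3]
    · rintro ⟨⟨h1, h2⟩, h3⟩
      rw [decomp h1 h2 h3]
      refine Submodule.add_mem _ (Submodule.smul_mem _ _ (Submodule.subset_span ?_))
        (Submodule.sum_mem _ fun i _ => Submodule.smul_mem _ _ (Submodule.subset_span ?_))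
      · exact ⟨Sum.inl (), rfl⟩
      · exact ⟨Sum.inr i, rfl⟩
  · rw [finrank_span_eq_card hli]
    simp [Fintype.card_sum]
    omega
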